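/- For τ, λ not in {0, −1/2, −1, …, −(k−1)/2}, the bilinear map J_k^{τ,λ}(φ,ψ) = Σ_{i+j=k} (−1)^j · C(2τ+k−1, j) · C(2λ+k−1, i) · φ⁽ⁱ⁾ ψ⁽ʲ⁾ satisfies the sl(2)-invariance identity with respect to X = x² d/dx: J_k^{τ,λ}(L^τ_{x²}φ, ψ) + J_k^{τ,λ}(φ, L^λ_{x²}ψ) = L^{τ+λ+k}_{x²}(J_k^{τ,λ}(φ,ψ)), where L^μ_{x²}(f) = x² f' + 2μ x f and C(x,i) = x(x−1)⋯(x−i+1)/i! is the generalized binomial coefficient. -/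

import Mathlib

open Polynomial

/-- The action `L^μ_X(f) = X f' + μ X' f` of `X d/dx` on μ-densities; for
`X = x²` this is `L^μ_{x²}(f) = x² f' + 2μ x f`. -/
noncomputable def Lact (mu : ℝ) (Xp f : Polynomial ℝ) : Polynomial ℝ :=
  Xp * derivative f + mu • (derivative Xp * f)

/-- Generalized binomial coefficient `C(x,i) = x(x−1)⋯(x−i+1)/i!`. -/
noncomputable def gbin (x : ℝ) (i : ℕ) : ℝ :=
  (∏ j ∈ Finset.range i, (x - j)) / (Nat.factorial i)

/-- The transvectant
`J_k^{τ,λ}(φ,ψ) = Σ_{i+j=k} (−1)^j C(2τ+k−1,j) C(2λ+k−1,i) φ⁽ⁱ⁾ ψ⁽ʲ⁾`. -/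
noncomputable def Jk (k : ℕ) (tau lam : ℝ) (phi psi : Polynomial ℝ) : Polynomial ℝ :=
  ∑ i ∈ Finset.range (k + 1),
    (((-1 : ℝ) ^ (k - i)) * gbin (2 * tau + k - 1) (k - i) * gbin (2 * lam + k - 1) i) •
      (derivative^[i] phi * derivative^[k - i] psi)

lemma gbin_succ (x : ℝ) (i : ℕ) :
    ((i : ℝ) + 1) * gbin x (i + 1) = (x - i) * gbin x i := by
  have h : (Nat.factorial i : ℝ) ≠ 0 := Nat.cast_ne_zero.2 i.factorial_ne_zero
  unfold gbin
  rw [Finset.prod_range_succ, Nat.factorial_succ]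
  push_cast
  field_simp


lemma coeff_cancel (k i : ℕ) (hik : i < k) (tau lam : ℝ) :
    ((-1:ℝ) ^ (k - (i+1)) * gbin (2*tau + k - 1) (k - (i+1)) * gbin (2*lam + k - 1) (i+1))
        * ((↑(i+1) : ℝ) * ((↑(i+1) : ℝ) - 1 + 2*tau))
      + ((-1:ℝ) ^ (k - i) * gbin (2*tau + k - 1) (k - i) * gbin (2*lam + k - 1) i)
        * ((↑(k-i) : ℝ) * ((↑(k-i) : ℝ) - 1 + 2*lam)) = 0 := by
  set m := k - (i+1) with hm
  have hm1 : k - i = m + 1 := by omega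
  have hmc : (m : ℝ) = (k : ℝ) - i - 1 := by
    have : ((i + 1 + m : ℕ) : ℝ) = (k : ℝ) := by rw [show i + 1 + m = k by omega]
    push_cast at this; linarith
  have h1 := gbin_succ (2*tau + k - 1) m
  have h2 := gbin_succ (2*lam + k - 1) i
  rw [hm1]
  push_cast
  rw [hmc] at h1 ⊢
  linear_combination (((-1:ℝ)^m * ((i:ℝ) + 2*tau) * gbin (2*tau + k - 1) m) * h2)
    - (((-1:ℝ)^m * (2*lam + (k:ℝ) - 1 - (i:ℝ)) * gbin (2*lam + k - 1) i) * h1)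

lemma deriv_Lact (mu : ℝ) (f : Polynomial ℝ) (i : ℕ) :
    derivative^[i] (Lact mu (X ^ 2) f) =
      X ^ 2 * derivative^[i + 1] f
        + (2 * (i : ℝ) + 2 * mu) • (X * derivative^[i] f)
        + ((i : ℝ) * ((i : ℝ) - 1 + 2 * mu)) • derivative^[i - 1] f := by
  induction i with
  | zero =>
      simp only [Function.iterate_zero_apply, Function.iterate_one, Lact, derivative_X_pow,
        smul_eq_C_mul, C_add, C_mul, C_sub, C_0, C_1, C_eq_natCast, Nat.cast_zero,
        Nat.zero_sub, Nat.cast_ofNat, pow_one, zero_add]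
      ring
  | succ n ih =>
      have h0 : derivative (((n:ℝ) * ((n:ℝ) - 1 + 2*mu)) • (⇑derivative)^[n-1] f)
          = ((n:ℝ) * ((n:ℝ) - 1 + 2*mu)) • (⇑derivative)^[n] f := by
        rcases n with _ | m
        · simp
        · rw [derivative_smul, Nat.add_sub_cancel,
            Function.iterate_succ_apply' (⇑derivative) m f]
      have h2 : derivative ((⇑derivative)^[n] f) = (⇑derivative)^[n+1] f :=
        (Function.iterate_succ_apply' _ _ _).symm
      have h3 : derivative ((⇑derivative)^[n+1] f) = (⇑derivative)^[n+1+1] f :=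
        (Function.iterate_succ_apply' _ _ _).symm
      rw [Function.iterate_succ_apply', ih, derivative_add, derivative_add, h0,
        derivative_mul, derivative_smul, derivative_mul, derivative_X_pow, derivative_X,
        h2, h3, Nat.add_sub_cancel]
      generalize (⇑derivative)^[n+1+1] f = p2
      generalize (⇑derivative)^[n+1] f = p1
      generalize (⇑derivative)^[n] f = p0
      simp only [smul_eq_C_mul, C_add, C_mul, C_sub, C_0, C_1, C_eq_natCast, map_ofNat,
        Nat.cast_add, Nat.cast_one, Nat.cast_ofNat, pow_one]
      ring

/-- For `τ, λ ∉ {0, −1/2, −1, …, −(k−1)/2}`, the transvectant `J_k^{τ,λ}` is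
`sl(2)`-invariant with respect to `X = x² d/dx`:
`J_k(L^τ_{x²}φ, ψ) + J_k(φ, L^λ_{x²}ψ) = L^{τ+λ+k}_{x²}(J_k(φ,ψ))`. -/
theorem Jk_sl2_invariant (k : ℕ) (hk : 0 < k) (tau lam : ℝ)
    (htau : ∀ s : ℕ, s < k → tau ≠ -(s : ℝ) / 2)
    (hlam : ∀ s : ℕ, s < k → lam ≠ -(s : ℝ) / 2)
    (phi psi : Polynomial ℝ) :
    Jk k tau lam (Lact tau (X ^ 2) phi) psi + Jk k tau lam phi (Lact lam (X ^ 2) psi)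
      = Lact (tau + lam + k) (X ^ 2) (Jk k tau lam phi psi) := by
  -- abbreviation for the coefficients
  set c : ℕ → ℝ := fun i =>
    ((-1 : ℝ) ^ (k - i)) * gbin (2 * tau + k - 1) (k - i) * gbin (2 * lam + k - 1) i with hc
  -- the correction term
  set T3 : Polynomial ℝ :=
    (∑ i ∈ Finset.range (k + 1),
      (c i * ((i : ℝ) * ((i : ℝ) - 1 + 2 * tau))) •
        (derivative^[i - 1] phi * derivative^[k - i] psi))
    + (∑ i ∈ Finset.range (k + 1),
      (c i * ((↑(k - i) : ℝ) * ((↑(k - i) : ℝ) - 1 + 2 * lam))) •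
        (derivative^[i] phi * derivative^[k - i - 1] psi)) with hT3
  have hT3zero : T3 = 0 := by
    rw [hT3, Finset.sum_range_succ' _ k, Finset.sum_range_succ]
    simp only [Nat.cast_zero, Nat.sub_self, zero_mul, mul_zero, zero_smul, add_zero,
      Nat.add_sub_cancel, Nat.sub_sub]
    rw [← Finset.sum_add_distrib]
    refine Finset.sum_eq_zero fun i hi => ?_
    have hik : i < k := Finset.mem_range.1 hi
    rw [← add_smul, coeff_cancel k i hik tau lam, zero_smul]
  -- derivative of Jk
  have hDJ : derivative (Jk k tau lam phi psi)
      = ∑ i ∈ Finset.range (k + 1),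
          c i • (derivative^[i + 1] phi * derivative^[k - i] psi
            + derivative^[i] phi * derivative^[k - i + 1] psi) := by
    unfold Jk
    rw [derivative_sum]
    refine Finset.sum_congr rfl fun i hi => ?_
    rw [derivative_smul, derivative_mul,
      ← Function.iterate_succ_apply' derivative i phi,
      ← Function.iterate_succ_apply' derivative (k - i) psi]
  -- now expand everything
  have hA : Jk k tau lam (Lact tau (X ^ 2) phi) psi
      = ∑ i ∈ Finset.range (k + 1),
          c i • ((X ^ 2 * derivative^[i + 1] phi
            + (2 * (i : ℝ) + 2 * tau) • (X * derivative^[i] phi)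
            + ((i : ℝ) * ((i : ℝ) - 1 + 2 * tau)) • derivative^[i - 1] phi)
            * derivative^[k - i] psi) := by
    unfold Jk
    exact Finset.sum_congr rfl fun i hi => by rw [deriv_Lact]
  have hB : Jk k tau lam phi (Lact lam (X ^ 2) psi)
      = ∑ i ∈ Finset.range (k + 1),
          c i • (derivative^[i] phi
            * (X ^ 2 * derivative^[k - i + 1] psi
            + (2 * (↑(k - i) : ℝ) + 2 * lam) • (X * derivative^[k - i] psi)
            + ((↑(k - i) : ℝ) * ((↑(k - i) : ℝ) - 1 + 2 * lam)) • derivative^[k - i - 1] psi)) := by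
    unfold Jk
    exact Finset.sum_congr rfl fun i hi => by rw [deriv_Lact]
  rw [hA, hB, Lact, hDJ]
  rw [derivative_X_pow]
  have key : (∑ i ∈ Finset.range (k + 1),
          c i • ((X ^ 2 * derivative^[i + 1] phi
            + (2 * (i : ℝ) + 2 * tau) • (X * derivative^[i] phi)
            + ((i : ℝ) * ((i : ℝ) - 1 + 2 * tau)) • derivative^[i - 1] phi)
            * derivative^[k - i] psi))
      + (∑ i ∈ Finset.range (k + 1),
          c i • (derivative^[i] phi
            * (X ^ 2 * derivative^[k - i + 1] psi
            + (2 * (↑(k - i) : ℝ) + 2 * lam) • (X * derivative^[k - i] psi)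
            + ((↑(k - i) : ℝ) * ((↑(k - i) : ℝ) - 1 + 2 * lam)) • derivative^[k - i - 1] psi)))
      = (X ^ 2 * ∑ i ∈ Finset.range (k + 1),
          c i • (derivative^[i + 1] phi * derivative^[k - i] psi
            + derivative^[i] phi * derivative^[k - i + 1] psi)
        + (tau + lam + (k : ℝ)) • ((C ((2 : ℕ) : ℝ) * X ^ (2 - 1)) *
            ∑ i ∈ Finset.range (k + 1),
              c i • (derivative^[i] phi * derivative^[k - i] psi))) + T3 := by
    rw [hT3]
    simp only [Finset.mul_sum, Finset.smul_sum]
    rw [← Finset.sum_add_distrib, ← Finset.sum_add_distrib, ← Finset.sum_add_distrib,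
      ← Finset.sum_add_distrib]
    refine Finset.sum_congr rfl fun i hi => ?_
    have hik : i ≤ k := Nat.lt_succ_iff.mp (Finset.mem_range.mp hi)
    rw [Nat.cast_sub hik]
    simp only [smul_eq_C_mul, C_mul, C_add, C_sub, C_0, C_1, C_eq_natCast, map_ofNat,
      Nat.cast_ofNat, pow_one]
    ring
  rw [key, hT3zero, add_zero]
  rfl
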